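/- Let K be a field of characteristic zero and n, k positive integers. In the universal enveloping algebra U(gl_n), for any two sequences I, J : Fin (k+1) → Fin n, the row-type and column-type quantum determinants agree: Σ_{σ ∈ Perm (Fin (k+1))} sgn(σ) · ∏_{m=0}^{k} (ι(E_{I(σ(m)), J(m)}) + (k − m)·δ_{I(σ(m)), J(m)}·1) = Σ_{σ ∈ Perm (Fin (k+1))} sgn(σ) · ∏_{m=0}^{k} (ι(E_{I(m), J(σ(m))}) + m·δ_{I(m), J(σ(m))}·1), where both products are ordered products taken with m increasing from 0 to k. -/

import Mathlib

variable (K : Type*) [Field K] (n k : ℕ)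

attribute [local instance] LieRing.ofAssociativeRing

/-- The row-type quantum determinant of order `k+1`:
`Σ_σ sgn(σ) ∏_{m=0}^{k} (ι(E_{I(σ(m)),J(m)}) + (k−m)·δ_{I(σ(m)),J(m)}·1)`,
the product ordered with `m` increasing. -/
noncomputable def qMinorRow (I J : Fin (k + 1) → Fin n) :
    UniversalEnvelopingAlgebra K (Matrix (Fin n) (Fin n) K) :=
  ∑ σ : Equiv.Perm (Fin (k + 1)),
    (Equiv.Perm.sign σ : ℤ) •
      (List.ofFn fun m : Fin (k + 1) =>
        UniversalEnvelopingAlgebra.ι K (Matrix.single (I (σ m)) (J m) (1 : K))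
          + (if I (σ m) = J m then ((k : K) - ((m : ℕ) : K)) •
              (1 : UniversalEnvelopingAlgebra K (Matrix (Fin n) (Fin n) K)) else 0)).prod

/-- The column-type quantum determinant of order `k+1`:
`Σ_σ sgn(σ) ∏_{m=0}^{k} (ι(E_{I(m),J(σ(m))}) + m·δ_{I(m),J(σ(m))}·1)`,
the product ordered with `m` increasing. -/
noncomputable def qMinorCol (I J : Fin (k + 1) → Fin n) :
    UniversalEnvelopingAlgebra K (Matrix (Fin n) (Fin n) K) :=
  ∑ σ : Equiv.Perm (Fin (k + 1)),
    (Equiv.Perm.sign σ : ℤ) •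
      (List.ofFn fun m : Fin (k + 1) =>
        UniversalEnvelopingAlgebra.ι K (Matrix.single (I m) (J (σ m)) (1 : K))
          + (if I m = J (σ m) then (((m : ℕ) : K)) •
              (1 : UniversalEnvelopingAlgebra K (Matrix (Fin n) (Fin n) K)) else 0)).prod

section Aux
open UniversalEnvelopingAlgebra Matrix Equiv List

abbrev UU := UniversalEnvelopingAlgebra K (Matrix (Fin n) (Fin n) K)

noncomputable def Phi (a b : Fin n) : UU K n := ι K (Matrix.single a b (1:K))

theorem Phi_mul (a b c d : Fin n) :
    Phi K n a b * Phi K n c d =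
      Phi K n c d * Phi K n a b + (if b = c then Phi K n a d else 0)
        - (if d = a then Phi K n c b else 0) := by
  have h := (ι K (L := Matrix (Fin n) (Fin n) K)).map_lie
    (Matrix.single a b (1:K)) (Matrix.single c d (1:K))
  rw [Ring.lie_def, Ring.lie_def] at h
  have hb : Matrix.single a b (1:K) * Matrix.single c d (1:K)
      - Matrix.single c d (1:K) * Matrix.single a b (1:K)
      = (if b = c then Matrix.single a d (1:K) else 0)
        - (if d = a then Matrix.single c b (1:K) else 0) := by
    by_cases h1 : b = c <;> by_cases h2 : d = a <;>
      simp [h1, h2, Matrix.single_mul_single_same, Matrix.single_mul_single_of_ne, Ne.symm]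
  rw [hb, map_sub] at h
  have h3 : ∀ (cond : Prop) [Decidable cond] (x : Matrix (Fin n) (Fin n) K),
      (ι K (if cond then x else 0) : UU K n) = if cond then ι K x else 0 := by
    intro cond _ x
    split_ifs with hc
    · rfl
    · exact map_zero _
  rw [h3, h3] at h
  unfold Phi
  linear_combination (norm := noncomm_ring) - h

noncomputable def fac (v : K) (a b : Fin n) : UU K n :=
  Phi K n a b + (if a = b then v • (1 : UU K n) else 0)

/-- Kronecker delta as a scalar. -/
def dl (a b : Fin n) : K := if a = b then 1 else 0

theorem dl_comm (a b : Fin n) : dl K n a b = dl K n b a := by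
  unfold dl; by_cases h : a = b <;> simp [h, Ne.symm, eq_comm]

theorem fac_eq (v : K) (a b : Fin n) :
    fac K n v a b = Phi K n a b + (v * dl K n a b) • (1 : UU K n) := by
  unfold fac dl
  by_cases h : a = b <;> simp [h]

theorem fac_mul_expand (u v : K) (x p y q : Fin n) :
    fac K n u x p * fac K n v y q =
      Phi K n x p * Phi K n y q
      + (v * dl K n y q) • Phi K n x p
      + (u * dl K n x p) • Phi K n y q
      + (u * dl K n x p * (v * dl K n y q)) • (1 : UU K n) := by
  rw [fac_eq, fac_eq]
  simp only [mul_add, add_mul, smul_mul_assoc, mul_smul_comm, smul_smul, mul_one, one_mul]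
  module

theorem Phi_mul' (a b c d : Fin n) :
    Phi K n a b * Phi K n c d =
      Phi K n c d * Phi K n a b + dl K n b c • Phi K n a d - dl K n d a • Phi K n c b := by
  rw [Phi_mul]
  unfold dl
  by_cases h1 : b = c <;> by_cases h2 : d = a <;> simp [h1, h2]

theorem comm_fac (u v : K) (a b c d : Fin n) :
    fac K n u a b * fac K n v c d - fac K n v c d * fac K n u a b
      = Phi K n a b * Phi K n c d - Phi K n c d * Phi K n a b := by
  rw [fac_mul_expand, fac_mul_expand]
  module

theorem coreQ (α : K) (x y p q : Fin n) :
    fac K n α x p * fac K n (α-1) y q + fac K n α x q * fac K n (α-1) y p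
      = fac K n α y p * fac K n (α-1) x q + fac K n α y q * fac K n (α-1) x p := by
  rw [fac_mul_expand, fac_mul_expand, fac_mul_expand, fac_mul_expand,
    Phi_mul' K n y p x q, Phi_mul' K n y q x p,
    dl_comm K n p x, dl_comm K n q y, dl_comm K n q x, dl_comm K n p y]
  module

theorem coreR (α : K) (p q w z : Fin n) :
    fac K n α p w * fac K n (α+1) q z + fac K n α q w * fac K n (α+1) p z
      = fac K n α p z * fac K n (α+1) q w + fac K n α q z * fac K n (α+1) p w := by
  rw [fac_mul_expand, fac_mul_expand, fac_mul_expand, fac_mul_expand,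
    Phi_mul' K n p z q w, Phi_mul' K n q z p w,
    dl_comm K n z q, dl_comm K n w p, dl_comm K n z p, dl_comm K n w q]
  module

theorem sum_cancel {α : Type*} [Fintype α] [CharZero K] (f : α → UU K n) (e : Equiv α α)
    (h : ∀ x, f (e x) = - f x) : ∑ x, f x = 0 := by
  have h1 : ∑ x, f x = - ∑ x, f x := by
    conv_lhs => rw [← Equiv.sum_comp e f]
    simp_rw [h]
    rw [Finset.sum_neg_distrib]
  have h2 : (2:K) • (∑ x, f x) = 0 := by
    rw [two_smul]
    nth_rewrite 2 [h1]
    abel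
  rcases smul_eq_zero.mp h2 with h3 | h3
  · exact absurd h3 two_ne_zero
  · exact h3

theorem prod_split {N : ℕ} (F : Fin N → UU K n) (La Lb : List (Fin N)) (a b : Fin N) :
    ((La ++ a :: b :: Lb).map F).prod
      = (La.map F).prod * ((F a * F b) * (Lb.map F).prod) := by
  simp [List.map_append, List.prod_append, mul_assoc]

/-- Row-type factor family. -/
noncomputable def fQ (I J : Fin (k+1) → Fin n) (τ σ : Equiv.Perm (Fin (k+1)))
    (m : Fin (k+1)) : UU K n :=
  fac K n ((k:K) - ((m:ℕ):K)) (I (σ m)) (J (τ m))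

/-- Row-type sum with column arrangement `τ`, factors along list `L`. -/
noncomputable def SQ (I J : Fin (k+1) → Fin n) (τ : Equiv.Perm (Fin (k+1)))
    (L : List (Fin (k+1))) : UU K n :=
  ∑ σ : Equiv.Perm (Fin (k+1)), (Equiv.Perm.sign σ : ℤ) • (L.map (fQ K n k I J τ σ)).prod

theorem fQ_congr (I J : Fin (k+1) → Fin n) (τ₁ τ₂ σ₁ σ₂ : Equiv.Perm (Fin (k+1)))
    (L : List (Fin (k+1))) (a b : Fin (k+1)) (hL : ∀ c ∈ L, c ≠ a ∧ c ≠ b)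
    (hτ : ∀ c : Fin (k+1), c ≠ a → c ≠ b → τ₁ c = τ₂ c)
    (hσ : ∀ c : Fin (k+1), c ≠ a → c ≠ b → σ₁ c = σ₂ c) :
    L.map (fQ K n k I J τ₁ σ₁) = L.map (fQ K n k I J τ₂ σ₂) := by
  refine List.map_congr_left fun c hc => ?_
  unfold fQ
  rw [hτ c (hL c hc).1 (hL c hc).2, hσ c (hL c hc).1 (hL c hc).2]

theorem SQ_swap [CharZero K] (I J : Fin (k+1) → Fin n) (τ : Equiv.Perm (Fin (k+1)))
    (a b : Fin (k+1)) (hab : (b:ℕ) = (a:ℕ)+1) (La Lb : List (Fin (k+1)))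
    (hLa : ∀ c ∈ La, c ≠ a ∧ c ≠ b) (hLb : ∀ c ∈ Lb, c ≠ a ∧ c ≠ b) :
    SQ K n k I J (τ * Equiv.swap a b) (La ++ a :: b :: Lb)
      = - SQ K n k I J τ (La ++ a :: b :: Lb) := by
  have hne : a ≠ b := by
    intro h; rw [h] at hab; omega
  rw [eq_neg_iff_add_eq_zero]
  unfold SQ
  rw [← Finset.sum_add_distrib]
  refine sum_cancel K n _ (Equiv.mulRight (Equiv.swap a b)) ?_
  intro σ
  simp only [Equiv.coe_mulRight]
  have hfixσ : ∀ c : Fin (k+1), c ≠ a → c ≠ b → (σ * Equiv.swap a b) c = σ c := by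
    intro c hca hcb
    simp [Equiv.swap_apply_of_ne_of_ne hca hcb]
  have hfixτ : ∀ c : Fin (k+1), c ≠ a → c ≠ b → (τ * Equiv.swap a b) c = τ c := by
    intro c hca hcb
    simp [Equiv.swap_apply_of_ne_of_ne hca hcb]
  have hrefl : ∀ (ρ : Equiv.Perm (Fin (k+1))) (c : Fin (k+1)), c ≠ a → c ≠ b → ρ c = ρ c :=
    fun _ _ _ _ => rfl
  have hsh : (k:K) - ((b:ℕ):K) = ((k:K) - ((a:ℕ):K)) - 1 := by
    rw [hab]; push_cast; ring
  have hsign : ((Equiv.Perm.sign (σ * Equiv.swap a b)) : ℤ) = - ((Equiv.Perm.sign σ) : ℤ) := by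
    rw [Equiv.Perm.sign_mul, Equiv.Perm.sign_swap hne]
    simp
  have e1 : fQ K n k I J (τ * Equiv.swap a b) (σ * Equiv.swap a b) a
      = fac K n ((k:K) - ((a:ℕ):K)) (I (σ b)) (J (τ b)) := by
    unfold fQ; simp
  have e2 : fQ K n k I J (τ * Equiv.swap a b) (σ * Equiv.swap a b) b
      = fac K n ((k:K) - ((b:ℕ):K)) (I (σ a)) (J (τ a)) := by
    unfold fQ; simp
  have e3 : fQ K n k I J τ (σ * Equiv.swap a b) a
      = fac K n ((k:K) - ((a:ℕ):K)) (I (σ b)) (J (τ a)) := by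
    unfold fQ; simp
  have e4 : fQ K n k I J τ (σ * Equiv.swap a b) b
      = fac K n ((k:K) - ((b:ℕ):K)) (I (σ a)) (J (τ b)) := by
    unfold fQ; simp
  have e5 : fQ K n k I J (τ * Equiv.swap a b) σ a
      = fac K n ((k:K) - ((a:ℕ):K)) (I (σ a)) (J (τ b)) := by
    unfold fQ; simp
  have e6 : fQ K n k I J (τ * Equiv.swap a b) σ b
      = fac K n ((k:K) - ((b:ℕ):K)) (I (σ b)) (J (τ a)) := by
    unfold fQ; simp
  have e7 : fQ K n k I J τ σ a = fac K n ((k:K) - ((a:ℕ):K)) (I (σ a)) (J (τ a)) := rfl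
  have e8 : fQ K n k I J τ σ b = fac K n ((k:K) - ((b:ℕ):K)) (I (σ b)) (J (τ b)) := rfl
  rw [prod_split, prod_split, prod_split, prod_split,
    fQ_congr K n k I J (τ * Equiv.swap a b) τ (σ * Equiv.swap a b) σ La a b hLa hfixτ hfixσ,
    fQ_congr K n k I J (τ * Equiv.swap a b) τ (σ * Equiv.swap a b) σ Lb a b hLb hfixτ hfixσ,
    fQ_congr K n k I J τ τ (σ * Equiv.swap a b) σ La a b hLa (hrefl τ) hfixσ,
    fQ_congr K n k I J τ τ (σ * Equiv.swap a b) σ Lb a b hLb (hrefl τ) hfixσ,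
    fQ_congr K n k I J (τ * Equiv.swap a b) τ σ σ La a b hLa hfixτ (hrefl σ),
    fQ_congr K n k I J (τ * Equiv.swap a b) τ σ σ Lb a b hLb hfixτ (hrefl σ),
    e1, e2, e3, e4, e5, e6, e7, e8, hsh, hsign]
  have key : fac K n ((k:K) - ((a:ℕ):K)) (I (σ b)) (J (τ b))
        * fac K n ((k:K) - ((a:ℕ):K) - 1) (I (σ a)) (J (τ a))
      + fac K n ((k:K) - ((a:ℕ):K)) (I (σ b)) (J (τ a))
        * fac K n ((k:K) - ((a:ℕ):K) - 1) (I (σ a)) (J (τ b))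
      = fac K n ((k:K) - ((a:ℕ):K)) (I (σ a)) (J (τ b))
        * fac K n ((k:K) - ((a:ℕ):K) - 1) (I (σ b)) (J (τ a))
      + fac K n ((k:K) - ((a:ℕ):K)) (I (σ a)) (J (τ a))
        * fac K n ((k:K) - ((a:ℕ):K) - 1) (I (σ b)) (J (τ b)) :=
    coreQ K n ((k:K) - ((a:ℕ):K)) (I (σ b)) (I (σ a)) (J (τ b)) (J (τ a))
  rw [neg_smul, neg_smul, ← neg_add, ← smul_add, ← smul_add, ← mul_add, ← mul_add,
    ← add_mul, ← add_mul, key]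

/-- Column-type factor family. -/
noncomputable def fR (I J : Fin (k+1) → Fin n) (ρ σ : Equiv.Perm (Fin (k+1)))
    (m : Fin (k+1)) : UU K n :=
  fac K n (((m:ℕ):K)) (I (ρ m)) (J (σ m))

/-- Column-type sum with row arrangement `ρ`, factors along list `L`. -/
noncomputable def SR (I J : Fin (k+1) → Fin n) (ρ : Equiv.Perm (Fin (k+1)))
    (L : List (Fin (k+1))) : UU K n :=
  ∑ σ : Equiv.Perm (Fin (k+1)), (Equiv.Perm.sign σ : ℤ) • (L.map (fR K n k I J ρ σ)).prod

theorem fR_congr (I J : Fin (k+1) → Fin n) (ρ₁ ρ₂ σ₁ σ₂ : Equiv.Perm (Fin (k+1)))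
    (L : List (Fin (k+1))) (a b : Fin (k+1)) (hL : ∀ c ∈ L, c ≠ a ∧ c ≠ b)
    (hρ : ∀ c : Fin (k+1), c ≠ a → c ≠ b → ρ₁ c = ρ₂ c)
    (hσ : ∀ c : Fin (k+1), c ≠ a → c ≠ b → σ₁ c = σ₂ c) :
    L.map (fR K n k I J ρ₁ σ₁) = L.map (fR K n k I J ρ₂ σ₂) := by
  refine List.map_congr_left fun c hc => ?_
  unfold fR
  rw [hρ c (hL c hc).1 (hL c hc).2, hσ c (hL c hc).1 (hL c hc).2]

theorem SR_swap [CharZero K] (I J : Fin (k+1) → Fin n) (ρ : Equiv.Perm (Fin (k+1)))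
    (a b : Fin (k+1)) (hab : (b:ℕ) = (a:ℕ)+1) (La Lb : List (Fin (k+1)))
    (hLa : ∀ c ∈ La, c ≠ a ∧ c ≠ b) (hLb : ∀ c ∈ Lb, c ≠ a ∧ c ≠ b) :
    SR K n k I J (ρ * Equiv.swap a b) (La ++ a :: b :: Lb)
      = - SR K n k I J ρ (La ++ a :: b :: Lb) := by
  have hne : a ≠ b := by
    intro h; rw [h] at hab; omega
  rw [eq_neg_iff_add_eq_zero]
  unfold SR
  rw [← Finset.sum_add_distrib]
  refine sum_cancel K n _ (Equiv.mulRight (Equiv.swap a b)) ?_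
  intro σ
  simp only [Equiv.coe_mulRight]
  have hfixσ : ∀ c : Fin (k+1), c ≠ a → c ≠ b → (σ * Equiv.swap a b) c = σ c := by
    intro c hca hcb
    simp [Equiv.swap_apply_of_ne_of_ne hca hcb]
  have hfixρ : ∀ c : Fin (k+1), c ≠ a → c ≠ b → (ρ * Equiv.swap a b) c = ρ c := by
    intro c hca hcb
    simp [Equiv.swap_apply_of_ne_of_ne hca hcb]
  have hrefl : ∀ (π : Equiv.Perm (Fin (k+1))) (c : Fin (k+1)), c ≠ a → c ≠ b → π c = π c :=
    fun _ _ _ _ => rfl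
  have hsh : (((b:ℕ):K)) = (((a:ℕ):K)) + 1 := by
    rw [hab]; push_cast; ring
  have hsign : ((Equiv.Perm.sign (σ * Equiv.swap a b)) : ℤ) = - ((Equiv.Perm.sign σ) : ℤ) := by
    rw [Equiv.Perm.sign_mul, Equiv.Perm.sign_swap hne]
    simp
  have e1 : fR K n k I J (ρ * Equiv.swap a b) (σ * Equiv.swap a b) a
      = fac K n (((a:ℕ):K)) (I (ρ b)) (J (σ b)) := by
    unfold fR; simp
  have e2 : fR K n k I J (ρ * Equiv.swap a b) (σ * Equiv.swap a b) b
      = fac K n (((b:ℕ):K)) (I (ρ a)) (J (σ a)) := by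
    unfold fR; simp
  have e3 : fR K n k I J ρ (σ * Equiv.swap a b) a
      = fac K n (((a:ℕ):K)) (I (ρ a)) (J (σ b)) := by
    unfold fR; simp
  have e4 : fR K n k I J ρ (σ * Equiv.swap a b) b
      = fac K n (((b:ℕ):K)) (I (ρ b)) (J (σ a)) := by
    unfold fR; simp
  have e5 : fR K n k I J (ρ * Equiv.swap a b) σ a
      = fac K n (((a:ℕ):K)) (I (ρ b)) (J (σ a)) := by
    unfold fR; simp
  have e6 : fR K n k I J (ρ * Equiv.swap a b) σ b
      = fac K n (((b:ℕ):K)) (I (ρ a)) (J (σ b)) := by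
    unfold fR; simp
  have e7 : fR K n k I J ρ σ a = fac K n (((a:ℕ):K)) (I (ρ a)) (J (σ a)) := rfl
  have e8 : fR K n k I J ρ σ b = fac K n (((b:ℕ):K)) (I (ρ b)) (J (σ b)) := rfl
  rw [prod_split, prod_split, prod_split, prod_split,
    fR_congr K n k I J (ρ * Equiv.swap a b) ρ (σ * Equiv.swap a b) σ La a b hLa hfixρ hfixσ,
    fR_congr K n k I J (ρ * Equiv.swap a b) ρ (σ * Equiv.swap a b) σ Lb a b hLb hfixρ hfixσ,
    fR_congr K n k I J ρ ρ (σ * Equiv.swap a b) σ La a b hLa (hrefl ρ) hfixσ,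
    fR_congr K n k I J ρ ρ (σ * Equiv.swap a b) σ Lb a b hLb (hrefl ρ) hfixσ,
    fR_congr K n k I J (ρ * Equiv.swap a b) ρ σ σ La a b hLa hfixρ (hrefl σ),
    fR_congr K n k I J (ρ * Equiv.swap a b) ρ σ σ Lb a b hLb hfixρ (hrefl σ),
    e1, e2, e3, e4, e5, e6, e7, e8, hsh, hsign]
  have key : fac K n (((a:ℕ):K)) (I (ρ b)) (J (σ b))
        * fac K n ((((a:ℕ):K)) + 1) (I (ρ a)) (J (σ a))
      + fac K n (((a:ℕ):K)) (I (ρ a)) (J (σ b))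
        * fac K n ((((a:ℕ):K)) + 1) (I (ρ b)) (J (σ a))
      = fac K n (((a:ℕ):K)) (I (ρ b)) (J (σ a))
        * fac K n ((((a:ℕ):K)) + 1) (I (ρ a)) (J (σ b))
      + fac K n (((a:ℕ):K)) (I (ρ a)) (J (σ a))
        * fac K n ((((a:ℕ):K)) + 1) (I (ρ b)) (J (σ b)) :=
    coreR K n (((a:ℕ):K)) (I (ρ b)) (I (ρ a)) (J (σ b)) (J (σ a))
  rw [neg_smul, neg_smul, ← neg_add, ← smul_add, ← smul_add, ← mul_add, ← mul_add,
    ← add_mul, ← add_mul, key]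

/-- Label-attached double-antisymmetrized sum. -/
noncomputable def SP (I J : Fin (k+1) → Fin n) (L : List (Fin (k+1))) : UU K n :=
  ∑ σ : Equiv.Perm (Fin (k+1)), ∑ τ : Equiv.Perm (Fin (k+1)),
    (((Equiv.Perm.sign σ : ℤ)) * ((Equiv.Perm.sign τ : ℤ))) • (L.map (fR K n k I J σ τ)).prod

theorem SP_swap [CharZero K] (I J : Fin (k+1) → Fin n)
    (a b : Fin (k+1)) (hne : a ≠ b) (La Lb : List (Fin (k+1)))
    (hLa : ∀ c ∈ La, c ≠ a ∧ c ≠ b) (hLb : ∀ c ∈ Lb, c ≠ a ∧ c ≠ b) :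
    SP K n k I J (La ++ a :: b :: Lb) = SP K n k I J (La ++ b :: a :: Lb) := by
  rw [← sub_eq_zero]
  unfold SP
  rw [← Fintype.sum_prod_type' (f := fun σ τ =>
        (((Equiv.Perm.sign σ : ℤ)) * ((Equiv.Perm.sign τ : ℤ))) •
          ((La ++ a :: b :: Lb).map (fR K n k I J σ τ)).prod),
    ← Fintype.sum_prod_type' (f := fun σ τ =>
        (((Equiv.Perm.sign σ : ℤ)) * ((Equiv.Perm.sign τ : ℤ))) •
          ((La ++ b :: a :: Lb).map (fR K n k I J σ τ)).prod),
    ← Finset.sum_sub_distrib]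
  refine sum_cancel K n _
    ((Equiv.mulRight (Equiv.swap a b)).prodCongr (Equiv.mulRight (Equiv.swap a b))) ?_
  rintro ⟨σ, τ⟩
  simp only [Equiv.prodCongr_apply, Equiv.coe_mulRight, Prod.map_apply]
  have hfix : ∀ (π : Equiv.Perm (Fin (k+1))) (c : Fin (k+1)), c ≠ a → c ≠ b →
      (π * Equiv.swap a b) c = π c := by
    intro π c hca hcb
    simp [Equiv.swap_apply_of_ne_of_ne hca hcb]
  have hsign : ((Equiv.Perm.sign (σ * Equiv.swap a b) : ℤ))
      * ((Equiv.Perm.sign (τ * Equiv.swap a b) : ℤ))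
      = ((Equiv.Perm.sign σ : ℤ)) * ((Equiv.Perm.sign τ : ℤ)) := by
    rw [Equiv.Perm.sign_mul, Equiv.Perm.sign_mul, Equiv.Perm.sign_swap hne]
    push_cast
    ring
  have hmapA := fR_congr K n k I J (σ * Equiv.swap a b) σ (τ * Equiv.swap a b) τ La a b hLa
    (hfix σ) (hfix τ)
  have hmapB := fR_congr K n k I J (σ * Equiv.swap a b) σ (τ * Equiv.swap a b) τ Lb a b hLb
    (hfix σ) (hfix τ)
  have e1 : fR K n k I J (σ * Equiv.swap a b) (τ * Equiv.swap a b) a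
      = fac K n (((a:ℕ):K)) (I (σ b)) (J (τ b)) := by
    unfold fR; simp
  have e2 : fR K n k I J (σ * Equiv.swap a b) (τ * Equiv.swap a b) b
      = fac K n (((b:ℕ):K)) (I (σ a)) (J (τ a)) := by
    unfold fR; simp
  have e3 : fR K n k I J σ τ a = fac K n (((a:ℕ):K)) (I (σ a)) (J (τ a)) := rfl
  have e4 : fR K n k I J σ τ b = fac K n (((b:ℕ):K)) (I (σ b)) (J (τ b)) := rfl
  rw [prod_split, prod_split, prod_split, prod_split, hmapA, hmapB, hsign,
    e1, e2, e3, e4]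
  rw [← smul_sub, ← smul_sub, ← mul_sub, ← mul_sub, ← sub_mul, ← sub_mul]
  have key : fac K n (((a:ℕ):K)) (I (σ b)) (J (τ b)) * fac K n (((b:ℕ):K)) (I (σ a)) (J (τ a))
      - fac K n (((b:ℕ):K)) (I (σ a)) (J (τ a)) * fac K n (((a:ℕ):K)) (I (σ b)) (J (τ b))
      = -(fac K n (((a:ℕ):K)) (I (σ a)) (J (τ a)) * fac K n (((b:ℕ):K)) (I (σ b)) (J (τ b))
        - fac K n (((b:ℕ):K)) (I (σ b)) (J (τ b)) * fac K n (((a:ℕ):K)) (I (σ a)) (J (τ a))) := by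
    rw [comm_fac, comm_fac, neg_sub]
  rw [key, neg_mul, mul_neg, smul_neg]

theorem nodup_split {α : Type*} {La Lb : List α} {a b : α}
    (h : (La ++ a :: b :: Lb).Nodup) :
    (∀ c ∈ La, c ≠ a ∧ c ≠ b) ∧ (∀ c ∈ Lb, c ≠ a ∧ c ≠ b) ∧ a ≠ b := by
  rw [List.Nodup, List.pairwise_append] at h
  obtain ⟨_, hcons, hcross⟩ := h
  obtain ⟨ha, hcons2⟩ := List.pairwise_cons.mp hcons
  obtain ⟨hb, _⟩ := List.pairwise_cons.mp hcons2
  refine ⟨fun c hc => ⟨?_, ?_⟩, fun c hc => ⟨?_, ?_⟩, ?_⟩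
  · exact hcross c hc a (List.mem_cons_self)
  · exact hcross c hc b (List.mem_cons_of_mem _ (List.mem_cons_self))
  · exact (ha c (List.mem_cons_of_mem _ hc)).symm
  · exact (hb c hc).symm
  · exact ha b (List.mem_cons_self)

set_option maxHeartbeats 1000000 in
theorem SP_perm [CharZero K] (I J : Fin (k+1) → Fin n) :
    ∀ (L L' L₀ : List (Fin (k+1))), L.Perm L' → (L₀ ++ L).Nodup →
      SP K n k I J (L₀ ++ L) = SP K n k I J (L₀ ++ L') := by
  intro L L' L₀ h
  induction h generalizing L₀ with
  | nil => intro _; rfl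
  | cons x h ih =>
    rename_i l₁ l₂
    intro hnd
    have e1 : L₀ ++ x :: l₁ = (L₀ ++ [x]) ++ l₁ := by simp
    have e2 : L₀ ++ x :: l₂ = (L₀ ++ [x]) ++ l₂ := by simp
    rw [e1, e2]
    exact ih (L₀ ++ [x]) (e1 ▸ hnd)
  | swap x y l =>
    intro hnd
    obtain ⟨hLa, hLb, hne⟩ := nodup_split hnd
    exact SP_swap K n k I J y x hne L₀ l hLa hLb
  | trans h₁ h₂ ih₁ ih₂ =>
    intro hnd
    rw [ih₁ L₀ hnd, ih₂ L₀ ((List.Perm.append_left L₀ h₁).nodup hnd)]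

theorem finRange_split (i : Fin k) : ∃ La Lb : List (Fin (k+1)),
    List.finRange (k+1) = La ++ i.castSucc :: i.succ :: Lb := by
  refine ⟨(List.finRange (k+1)).take i, (List.finRange (k+1)).drop (i+2), ?_⟩
  have hlen : (List.finRange (k+1)).length = k+1 := List.length_finRange
  have h1 : (List.finRange (k+1)).drop i
      = i.castSucc :: (List.finRange (k+1)).drop (i+1) := by
    rw [List.drop_eq_getElem_cons (by omega)]
    congr 1
    simp only [List.getElem_finRange]
    apply Fin.ext
    simp [Fin.castSucc, Nat.mod_eq_of_lt (by omega : (i:ℕ) < k+1)]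
  have h2 : (List.finRange (k+1)).drop (i+1)
      = i.succ :: (List.finRange (k+1)).drop (i+2) := by
    rw [List.drop_eq_getElem_cons (by omega)]
    congr 1
    simp only [List.getElem_finRange]
    apply Fin.ext
    simp [Nat.mod_eq_of_lt (by omega : (i:ℕ)+1 < k+1)]
  conv_lhs => rw [← List.take_append_drop (i:ℕ) (List.finRange (k+1)), h1, h2]

theorem SQ_sign [CharZero K] (I J : Fin (k+1) → Fin n) (τ : Equiv.Perm (Fin (k+1))) :
    SQ K n k I J τ (List.finRange (k+1))
      = ((Equiv.Perm.sign τ : ℤ)) • SQ K n k I J 1 (List.finRange (k+1)) := by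
  have hgen : τ ∈ Submonoid.closure
      (Set.range fun i : Fin k => Equiv.swap i.castSucc i.succ) := by
    rw [Equiv.Perm.mclosure_swap_castSucc_succ]; trivial
  have main : ∀ (x : Equiv.Perm (Fin (k+1))),
      x ∈ Submonoid.closure (Set.range fun i : Fin k => Equiv.swap i.castSucc i.succ) →
      ∀ τ₀, SQ K n k I J (τ₀ * x) (List.finRange (k+1))
        = ((Equiv.Perm.sign x : ℤ)) • SQ K n k I J τ₀ (List.finRange (k+1)) := by
    intro x hx
    induction hx using Submonoid.closure_induction with
    | mem x hx =>
      obtain ⟨i, rfl⟩ := hx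
      intro τ₀
      have hne : i.castSucc ≠ i.succ := (Fin.castSucc_lt_succ (i := i)).ne
      obtain ⟨La, Lb, hsplit⟩ := finRange_split k i
      have hnd : (La ++ i.castSucc :: i.succ :: Lb).Nodup := by
        rw [← hsplit]; exact List.nodup_finRange _
      obtain ⟨hLa, hLb, _⟩ := nodup_split hnd
      rw [Equiv.Perm.sign_swap hne, hsplit]
      rw [SQ_swap K n k I J τ₀ i.castSucc i.succ (by simp) La Lb hLa hLb]
      simp
    | one =>
      intro τ₀
      simp
    | mul x y _ _ px py =>
      intro τ₀
      rw [← mul_assoc, py (τ₀ * x), px τ₀, Equiv.Perm.sign_mul, smul_smul]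
      push_cast
      ring_nf
  have := main τ hgen 1
  simpa using this

theorem SR_sign [CharZero K] (I J : Fin (k+1) → Fin n) (ρ : Equiv.Perm (Fin (k+1))) :
    SR K n k I J ρ (List.finRange (k+1))
      = ((Equiv.Perm.sign ρ : ℤ)) • SR K n k I J 1 (List.finRange (k+1)) := by
  have hgen : ρ ∈ Submonoid.closure
      (Set.range fun i : Fin k => Equiv.swap i.castSucc i.succ) := by
    rw [Equiv.Perm.mclosure_swap_castSucc_succ]; trivial
  have main : ∀ (x : Equiv.Perm (Fin (k+1))),
      x ∈ Submonoid.closure (Set.range fun i : Fin k => Equiv.swap i.castSucc i.succ) →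
      ∀ ρ₀, SR K n k I J (ρ₀ * x) (List.finRange (k+1))
        = ((Equiv.Perm.sign x : ℤ)) • SR K n k I J ρ₀ (List.finRange (k+1)) := by
    intro x hx
    induction hx using Submonoid.closure_induction with
    | mem x hx =>
      obtain ⟨i, rfl⟩ := hx
      intro ρ₀
      have hne : i.castSucc ≠ i.succ := (Fin.castSucc_lt_succ (i := i)).ne
      obtain ⟨La, Lb, hsplit⟩ := finRange_split k i
      have hnd : (La ++ i.castSucc :: i.succ :: Lb).Nodup := by
        rw [← hsplit]; exact List.nodup_finRange _
      obtain ⟨hLa, hLb, _⟩ := nodup_split hnd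
      rw [Equiv.Perm.sign_swap hne, hsplit]
      rw [SR_swap K n k I J ρ₀ i.castSucc i.succ (by simp) La Lb hLa hLb]
      simp
    | one =>
      intro ρ₀
      simp
    | mul x y _ _ px py =>
      intro ρ₀
      rw [← mul_assoc, py (ρ₀ * x), px ρ₀, Equiv.Perm.sign_mul, smul_smul]
      push_cast
      ring_nf
  have := main ρ hgen 1
  simpa using this

theorem sign_sq (N : ℕ) (τ : Equiv.Perm (Fin N)) :
    ((Equiv.Perm.sign τ : ℤ)) * ((Equiv.Perm.sign τ : ℤ)) = 1 := by
  rw [← Units.val_mul, Int.units_mul_self, Units.val_one]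

theorem rowAvg [CharZero K] (I J : Fin (k+1) → Fin n) :
    ∑ τ : Equiv.Perm (Fin (k+1)),
        ((Equiv.Perm.sign τ : ℤ)) • SQ K n k I J τ (List.finRange (k+1))
      = (Nat.factorial (k+1)) • SQ K n k I J 1 (List.finRange (k+1)) := by
  have h : ∀ τ : Equiv.Perm (Fin (k+1)),
      ((Equiv.Perm.sign τ : ℤ)) • SQ K n k I J τ (List.finRange (k+1))
        = SQ K n k I J 1 (List.finRange (k+1)) := by
    intro τ
    rw [SQ_sign, smul_smul, sign_sq, one_smul]
  rw [Finset.sum_congr rfl (fun τ _ => h τ), Finset.sum_const, Finset.card_univ,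
    Fintype.card_perm, Fintype.card_fin]

theorem colAvg [CharZero K] (I J : Fin (k+1) → Fin n) :
    ∑ ρ : Equiv.Perm (Fin (k+1)),
        ((Equiv.Perm.sign ρ : ℤ)) • SR K n k I J ρ (List.finRange (k+1))
      = (Nat.factorial (k+1)) • SR K n k I J 1 (List.finRange (k+1)) := by
  have h : ∀ ρ : Equiv.Perm (Fin (k+1)),
      ((Equiv.Perm.sign ρ : ℤ)) • SR K n k I J ρ (List.finRange (k+1))
        = SR K n k I J 1 (List.finRange (k+1)) := by
    intro ρ
    rw [SR_sign, smul_smul, sign_sq, one_smul]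
  rw [Finset.sum_congr rfl (fun ρ _ => h ρ), Finset.sum_const, Finset.card_univ,
    Fintype.card_perm, Fintype.card_fin]

theorem colDouble (I J : Fin (k+1) → Fin n) :
    ∑ ρ : Equiv.Perm (Fin (k+1)),
        ((Equiv.Perm.sign ρ : ℤ)) • SR K n k I J ρ (List.finRange (k+1))
      = SP K n k I J (List.finRange (k+1)) := by
  unfold SR SP
  refine Finset.sum_congr rfl fun ρ _ => ?_
  rw [Finset.smul_sum]
  refine Finset.sum_congr rfl fun σ _ => ?_
  rw [smul_smul]

theorem rowDouble (I J : Fin (k+1) → Fin n) :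
    ∑ τ : Equiv.Perm (Fin (k+1)),
        ((Equiv.Perm.sign τ : ℤ)) • SQ K n k I J τ (List.finRange (k+1))
      = SP K n k I J ((List.finRange (k+1)).map Fin.rev) := by
  have lhs_eq : ∑ τ : Equiv.Perm (Fin (k+1)),
      ((Equiv.Perm.sign τ : ℤ)) • SQ K n k I J τ (List.finRange (k+1))
      = ∑ σ : Equiv.Perm (Fin (k+1)), ∑ τ : Equiv.Perm (Fin (k+1)),
          (((Equiv.Perm.sign σ : ℤ)) * ((Equiv.Perm.sign τ : ℤ))) •
            ((List.finRange (k+1)).map (fQ K n k I J τ σ)).prod := by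
    unfold SQ
    rw [Finset.sum_comm]
    refine Finset.sum_congr rfl fun τ _ => ?_
    rw [Finset.smul_sum]
    refine Finset.sum_congr rfl fun σ _ => ?_
    rw [smul_smul, mul_comm]
  rw [lhs_eq]
  unfold SP
  rw [← Equiv.sum_comp (Equiv.mulRight (Fin.revPerm : Equiv.Perm (Fin (k+1))))
    (fun σ => ∑ τ : Equiv.Perm (Fin (k+1)),
      (((Equiv.Perm.sign σ : ℤ)) * ((Equiv.Perm.sign τ : ℤ))) •
        (((List.finRange (k+1)).map Fin.rev).map (fR K n k I J σ τ)).prod)]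
  refine Finset.sum_congr rfl fun σ _ => ?_
  rw [← Equiv.sum_comp (Equiv.mulRight (Fin.revPerm : Equiv.Perm (Fin (k+1))))
    (fun τ => (((Equiv.Perm.sign ((Equiv.mulRight (Fin.revPerm : Equiv.Perm (Fin (k+1)))) σ) : ℤ))
        * ((Equiv.Perm.sign τ : ℤ))) •
      (((List.finRange (k+1)).map Fin.rev).map
        (fR K n k I J ((Equiv.mulRight (Fin.revPerm : Equiv.Perm (Fin (k+1)))) σ) τ)).prod)]
  refine Finset.sum_congr rfl fun τ _ => ?_
  simp only [Equiv.coe_mulRight]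
  have hsign : ((Equiv.Perm.sign (σ * Fin.revPerm) : ℤ)) * ((Equiv.Perm.sign (τ * Fin.revPerm) : ℤ))
      = ((Equiv.Perm.sign σ : ℤ)) * ((Equiv.Perm.sign τ : ℤ)) := by
    rw [Equiv.Perm.sign_mul, Equiv.Perm.sign_mul]
    push_cast
    have hu := sign_sq (k+1) (Fin.revPerm : Equiv.Perm (Fin (k+1)))
    linear_combination ((Equiv.Perm.sign σ : ℤ)) * ((Equiv.Perm.sign τ : ℤ)) * hu
  have hmap : ((List.finRange (k+1)).map Fin.rev).map
      (fR K n k I J (σ * Fin.revPerm) (τ * Fin.revPerm))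
      = (List.finRange (k+1)).map (fQ K n k I J τ σ) := by
    rw [List.map_map]
    refine List.map_congr_left fun m _ => ?_
    unfold fR fQ
    simp only [Function.comp_apply, Equiv.Perm.mul_apply, Fin.revPerm_apply, Fin.rev_rev]
    congr 1
    rw [Fin.val_rev]
    have hm : (m:ℕ) ≤ k := Fin.is_le m
    push_cast [Nat.succ_sub_succ_eq_sub, Nat.cast_sub hm]
    ring
  rw [hsign, hmap]

theorem SP_rev [CharZero K] (I J : Fin (k+1) → Fin n) :
    SP K n k I J ((List.finRange (k+1)).map Fin.rev)
      = SP K n k I J (List.finRange (k+1)) := by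
  have hp : ((List.finRange (k+1)).map Fin.rev).Perm (List.finRange (k+1)) := by
    have h := Equiv.Perm.map_finRange_perm (Fin.revPerm : Equiv.Perm (Fin (k+1)))
    exact h
  have hnd : (([] : List (Fin (k+1))) ++ (List.finRange (k+1)).map Fin.rev).Nodup := by
    rw [List.nil_append]
    exact (List.nodup_finRange _).map Fin.rev_injective
  have h := SP_perm K n k I J ((List.finRange (k+1)).map Fin.rev) (List.finRange (k+1)) [] hp hnd
  simpa using h


theorem qRow_eq (I J : Fin (k+1) → Fin n) :
    qMinorRow K n k I J = SQ K n k I J 1 (List.finRange (k+1)) := by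
  unfold qMinorRow SQ
  refine Finset.sum_congr rfl fun σ _ => ?_
  congr 1
  rw [List.ofFn_eq_map]
  refine congrArg List.prod ?_
  refine List.map_congr_left fun m _ => ?_
  unfold fQ fac Phi
  simp
  rfl

theorem qCol_eq (I J : Fin (k+1) → Fin n) :
    qMinorCol K n k I J = SR K n k I J 1 (List.finRange (k+1)) := by
  unfold qMinorCol SR
  refine Finset.sum_congr rfl fun σ _ => ?_
  congr 1
  rw [List.ofFn_eq_map]
  refine congrArg List.prod ?_
  refine List.map_congr_left fun m _ => ?_
  unfold fR fac Phi
  simp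
  rfl

end Aux

/-- The row-type and column-type quantum determinants defining the
quantum minor `𝐄_{IJ}` of order `k+1` in `U(gl_n)` agree. -/
theorem qMinorRow_eq_qMinorCol [CharZero K] (hn : 0 < n) (hk : 0 < k)
    (I J : Fin (k + 1) → Fin n) :
    qMinorRow K n k I J = qMinorCol K n k I J := by
  have h1 : (Nat.factorial (k+1)) • SQ K n k I J 1 (List.finRange (k+1))
      = (Nat.factorial (k+1)) • SR K n k I J 1 (List.finRange (k+1)) := by
    rw [← rowAvg, ← colAvg, rowDouble, colDouble, SP_rev]
  have h2 : ((Nat.factorial (k+1) : K)) • SQ K n k I J 1 (List.finRange (k+1))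
      = ((Nat.factorial (k+1) : K)) • SR K n k I J 1 (List.finRange (k+1)) := by
    rw [Nat.cast_smul_eq_nsmul, Nat.cast_smul_eq_nsmul]
    exact h1
  have hne : ((Nat.factorial (k+1) : K)) ≠ 0 :=
    Nat.cast_ne_zero.mpr (Nat.factorial_ne_zero _)
  have h3 := smul_right_injective (UU K n) hne h2
  rw [qRow_eq, qCol_eq]
  exact h3
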